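/- There exists a constant c > 0 such that for all k ≥ 1, N ≥ 2, T ≥ 1 and C ≥ 1 there exists a Decision Maker strategy σ with the following property: for every approval profile sequence S : Fin T → Fin N → Finset (Fin k) whose conflict number is at most C, every agent's dissatisfaction in the play of σ against S is at most c · T^(1 - 1/(k+1)) · (C · k · Real.log N)^(1/(k+1)). -/

import Mathlib

open Finset

/-- The option chosen by strategy `σ` against the approval profile sequence `S`
in round `r`: `σ` applied to the history `[S 0, …, S r]`. -/
def play {k N T : ℕ} (σ : List (Fin N → Finset (Fin k)) → Fin k)
    (S : Fin T → Fin N → Finset (Fin k)) (r : Fin T) : Fin k :=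
  σ (List.ofFn (fun j : Fin (r.val + 1) => S (Fin.castLE r.isLt j)))

/-- The dissatisfaction of agent `i` in the play of `σ` against `S`:
the number of rounds in which the chosen option is not approved by `i`. -/
def dissat {k N T : ℕ} (σ : List (Fin N → Finset (Fin k)) → Fin k)
    (S : Fin T → Fin N → Finset (Fin k)) (i : Fin N) : ℕ :=
  (Finset.univ.filter fun r : Fin T => play σ S r ∉ S r i).card

/-- The conflict number of `S` is at most `C`: every subset `A` of agents of size
at most `k` is in a conflict (no option satisfies everyone in `A`) in at most `C` rounds. -/
def conflictNumberLe {k N T : ℕ} (S : Fin T → Fin N → Finset (Fin k)) (C : ℕ) : Prop :=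
  ∀ A : Finset (Fin N), A.card ≤ k →
    (Finset.univ.filter fun r : Fin T => ¬ ∃ θ : Fin k, ∀ i ∈ A, θ ∈ S r i).card ≤ C

namespace EW

variable {k N : ℕ}

/-- weight of the set of agents rejecting option `θ` in profile `p`, w.r.t. counts `D`. -/
noncomputable def rw (η : ℝ) (D : Fin N → ℕ) (p : Fin N → Finset (Fin k)) (θ : Fin k) : ℝ :=
  ∑ i ∈ univ.filter (fun i => θ ∉ p i), Real.exp (η * D i)

noncomputable def pick (hk : 0 < k) (η : ℝ) (D : Fin N → ℕ) (p : Fin N → Finset (Fin k)) :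
    Fin k :=
  Classical.choose (Finset.exists_min_image (univ : Finset (Fin k)) (rw η D p)
    ⟨⟨0, hk⟩, mem_univ _⟩)

lemma pick_min (hk : 0 < k) (η : ℝ) (D : Fin N → ℕ) (p : Fin N → Finset (Fin k)) (θ : Fin k) :
    rw η D p (pick hk η D p) ≤ rw η D p θ := by
  have h := Classical.choose_spec (Finset.exists_min_image (univ : Finset (Fin k)) (rw η D p)
    ⟨⟨0, hk⟩, mem_univ _⟩)
  exact h.2 θ (mem_univ θ)

noncomputable def stepD (hk : 0 < k) (η : ℝ) (D : Fin N → ℕ) (p : Fin N → Finset (Fin k)) :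
    Fin N → ℕ :=
  fun i => D i + if pick hk η D p ∈ p i then 0 else 1

noncomputable def runD (hk : 0 < k) (η : ℝ) :
    (Fin N → ℕ) → List (Fin N → Finset (Fin k)) → (Fin N → ℕ)
  | D, [] => D
  | D, p :: l => runD hk η (stepD hk η D p) l

lemma runD_concat (hk : 0 < k) (η : ℝ) (D : Fin N → ℕ) (l : List (Fin N → Finset (Fin k)))
    (p : Fin N → Finset (Fin k)) :
    runD hk η D (l.concat p) = stepD hk η (runD hk η D l) p := by
  induction l generalizing D with
  | nil => rfl
  | cons q l ih => simp only [List.concat_cons, runD]; exact ih _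

/-- The exponential-weights strategy. -/
noncomputable def strat (hk : 0 < k) (η : ℝ) : List (Fin N → Finset (Fin k)) → Fin k :=
  fun l => pick hk η (runD hk η (fun _ => 0) l.dropLast) (l.getLastD (fun _ => ∅))

section Run

variable {T : ℕ} (hk : 0 < k) (η : ℝ) (S : Fin T → Fin N → Finset (Fin k))

/-- dissatisfaction counts before round `r`. -/
noncomputable def DD : ℕ → Fin N → ℕ
  | 0 => fun _ => 0
  | r + 1 => if h : r < T then stepD hk η (DD r) (S ⟨r, h⟩) else DD r

noncomputable def θat (r : Fin T) : Fin k := pick hk η (DD hk η S r.val) (S r)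

lemma DD_succ_pos {r : ℕ} (h : r < T) :
    DD hk η S (r + 1) = stepD hk η (DD hk η S r) (S ⟨r, h⟩) := by
  simp [DD, h]

lemma DD_succ_neg {r : ℕ} (h : ¬ r < T) :
    DD hk η S (r + 1) = DD hk η S r := by
  simp [DD, h]

lemma prefix_eq (r : ℕ) (hr : r ≤ T) :
    runD hk η (fun _ => 0) (List.ofFn (fun j : Fin r => S (Fin.castLE hr j))) =
      DD hk η S r := by
  induction r with
  | zero => rfl
  | succ r ih =>
    have hr' : r ≤ T := Nat.le_of_succ_le hr
    have hrT : r < T := Nat.lt_of_succ_le hr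
    have hfun : (fun j : Fin r => S (Fin.castLE hr (Fin.castSucc j))) =
        (fun j : Fin r => S (Fin.castLE hr' j)) := by
      funext j; rfl
    have hlast : S (Fin.castLE hr (Fin.last r)) = S ⟨r, hrT⟩ := rfl
    rw [List.ofFn_succ', hfun, hlast, runD_concat, ih hr', DD_succ_pos hk η S hrT]

lemma play_eq (r : Fin T) :
    play (strat hk η) S r = θat hk η S r := by
  unfold play strat θat
  have hfun : (fun j : Fin r.val => S (Fin.castLE r.isLt (Fin.castSucc j))) =
      (fun j : Fin r.val => S (Fin.castLE (Nat.le_of_lt r.isLt) j)) := by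
    funext j; rfl
  have hlast : S (Fin.castLE r.isLt (Fin.last r.val)) = S r := rfl
  rw [List.ofFn_succ', hfun, hlast, List.concat_eq_append, List.dropLast_concat,
    List.getLastD_concat, prefix_eq hk η S r.val (Nat.le_of_lt r.isLt)]

lemma DD_sum (i : Fin N) (r : ℕ) :
    DD hk η S r i = ∑ t ∈ Finset.range r,
      (if h : t < T then (if θat hk η S ⟨t, h⟩ ∈ S ⟨t, h⟩ i then 0 else 1) else 0) := by
  induction r with
  | zero => simp [DD]
  | succ r ih =>
    rw [Finset.sum_range_succ, ← ih]
    by_cases h : r < T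
    · rw [DD_succ_pos hk η S h, dif_pos h]
      simp [stepD, θat]; congr
    · rw [DD_succ_neg hk η S h, dif_neg h, add_zero]

lemma dissat_eq (i : Fin N) :
    dissat (strat hk η) S i = DD hk η S T i := by
  unfold dissat
  rw [DD_sum]
  rw [Finset.card_filter]
  rw [← Fin.sum_univ_eq_sum_range
    (fun t => if h : t < T then (if θat hk η S ⟨t, h⟩ ∈ S ⟨t, h⟩ i then 0 else 1) else 0) T]
  apply Finset.sum_congr rfl
  intro t _
  rw [play_eq]
  simp [t.isLt]

end Run

end EW

namespace EW

section Analysis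

variable {k N T : ℕ} (hk : 0 < k) (η : ℝ) (S : Fin T → Fin N → Finset (Fin k))

/-- rejecters of option θ at round r -/
def rejS (r : Fin T) (θ : Fin k) : Finset (Fin N) := univ.filter (fun i => θ ∉ S r i)

/-- weight of dissatisfied agents in round r -/
noncomputable def wq (r : Fin T) : ℝ :=
  ∑ i ∈ rejS S r (θat hk η S r), Real.exp (η * DD hk η S r.val i)

/-- the potential -/
noncomputable def Φ (r : ℕ) : ℝ := ∑ i : Fin N, Real.exp (η * DD hk η S r i)

variable {η}

lemma DD_mono (hη : 0 ≤ η) {r r' : ℕ} (h : r ≤ r') (i : Fin N) :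
    DD hk η S r i ≤ DD hk η S r' i := by
  induction r' with
  | zero => simp_all
  | succ r' ih =>
    rcases Nat.lt_or_ge r (r' + 1) with h' | h'
    · have h2 : DD hk η S r i ≤ DD hk η S r' i := ih (Nat.lt_succ_iff.mp h')
      refine h2.trans ?_
      by_cases hT : r' < T
      · rw [DD_succ_pos hk η S hT]; simp [stepD]
      · rw [DD_succ_neg hk η S hT]
    · have : r = r' + 1 := le_antisymm h h'
      simp [this]

lemma Phi_pos' (hN : 0 < N) (r : ℕ) : 0 < Φ hk η S r := by
  apply Finset.sum_pos (fun i _ => Real.exp_pos _)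
  exact ⟨⟨0, hN⟩, mem_univ _⟩

lemma N_le_Phi (hη : 0 ≤ η) (r : ℕ) : (N : ℝ) ≤ Φ hk η S r := by
  have : ∀ i : Fin N, (1:ℝ) ≤ Real.exp (η * DD hk η S r i) := by
    intro i
    rw [show (1:ℝ) = Real.exp 0 from (Real.exp_zero).symm]
    exact Real.exp_le_exp.mpr (by positivity)
  calc (N : ℝ) = ∑ _i : Fin N, (1:ℝ) := by simp
    _ ≤ _ := Finset.sum_le_sum (fun i _ => this i)

lemma exp_le_Phi (r : ℕ) (i : Fin N) :
    Real.exp (η * DD hk η S r i) ≤ Φ hk η S r :=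
  Finset.single_le_sum (f := fun j => Real.exp (η * DD hk η S r j))
    (fun j _ => (Real.exp_pos _).le) (mem_univ i)

lemma Phi_mono (hη : 0 ≤ η) {r r' : ℕ} (h : r ≤ r') : Φ hk η S r ≤ Φ hk η S r' :=
  Finset.sum_le_sum (fun i _ => Real.exp_le_exp.mpr
    (mul_le_mul_of_nonneg_left (by exact_mod_cast DD_mono hk S hη h i) hη))

lemma wq_nonneg (r : Fin T) : 0 ≤ wq hk η S r :=
  Finset.sum_nonneg (fun i _ => (Real.exp_pos _).le)

lemma wq_le_Phi (r : Fin T) : wq hk η S r ≤ Φ hk η S r.val :=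
  Finset.sum_le_sum_of_subset_of_nonneg (Finset.filter_subset _ _)
    (fun i _ _ => (Real.exp_pos _).le)

lemma wq_min (r : Fin T) (θ : Fin k) :
    wq hk η S r ≤ ∑ i ∈ rejS S r θ, Real.exp (η * DD hk η S r.val i) :=
  pick_min hk η (DD hk η S r.val) (S r) θ

lemma Phi_succ (r : Fin T) :
    Φ hk η S (r.val + 1) = Φ hk η S r.val + (Real.exp η - 1) * wq hk η S r := by
  unfold Φ
  rw [DD_succ_pos hk η S r.isLt]
  have hsp : ∀ i : Fin N,
      Real.exp (η * stepD hk η (DD hk η S r.val) (S ⟨r.val, r.isLt⟩) i)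
      = Real.exp (η * DD hk η S r.val i) *
        (if θat hk η S r ∈ S r i then 1 else Real.exp η) := by
    intro i
    unfold stepD θat
    have : (⟨r.val, r.isLt⟩ : Fin T) = r := rfl
    rw [this]
    by_cases hmem : pick hk η (DD hk η S r.val) (S r) ∈ S r i
    · simp [hmem]
    · simp only [hmem, if_false, if_neg hmem]
      rw [← Real.exp_add]
      congr 1
      push_cast
      ring
  calc ∑ i : Fin N, Real.exp (η * stepD hk η (DD hk η S r.val) (S ⟨r.val, r.isLt⟩) i)
      = ∑ i : Fin N, Real.exp (η * DD hk η S r.val i) *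
        (if θat hk η S r ∈ S r i then 1 else Real.exp η) := by
        exact Finset.sum_congr rfl (fun i _ => hsp i)
    _ = ∑ i ∈ univ.filter (fun i => θat hk η S r ∉ S r i),
          Real.exp (η * DD hk η S r.val i) * Real.exp η
        + ∑ i ∈ univ.filter (fun i => ¬ θat hk η S r ∉ S r i),
          Real.exp (η * DD hk η S r.val i) := by
        rw [← Finset.sum_filter_add_sum_filter_not univ (fun i => θat hk η S r ∉ S r i)]
        congr 1
        · exact Finset.sum_congr rfl (fun i hi => by
            simp only [mem_filter] at hi; simp [hi.2])
        · exact Finset.sum_congr rfl (fun i hi => by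
            simp only [mem_filter, not_not] at hi; simp [hi.2])
    _ = Φ hk η S r.val + (Real.exp η - 1) * wq hk η S r := by
        unfold Φ wq rejS
        rw [← Finset.sum_filter_add_sum_filter_not univ (fun i => θat hk η S r ∉ S r i)
          (fun i => Real.exp (η * DD hk η S r.val i))]
        rw [← Finset.sum_mul]
        ring

end Analysis

end EW

namespace EW

section Budget

variable {k N T : ℕ} (hk : 0 < k) {η : ℝ} (S : Fin T → Fin N → Finset (Fin k))

lemma wq_pow_le_prod (r : Fin T) :
    (wq hk η S r)^k ≤ ∏ θ : Fin k, ∑ i ∈ rejS S r θ, Real.exp (η * DD hk η S r.val i) := by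
  calc (wq hk η S r)^k = ∏ _θ : Fin k, wq hk η S r := by
        rw [Finset.prod_const, card_univ, Fintype.card_fin]
    _ ≤ _ := Finset.prod_le_prod (fun θ _ => wq_nonneg hk S r) (fun θ _ => wq_min hk S r θ)

lemma budget (hη : 0 ≤ η) {C : ℕ} (hS : conflictNumberLe S C) (r₀ : ℕ) :
    ∑ r ∈ univ.filter (fun r : Fin T => r.val < r₀), (wq hk η S r)^k
      ≤ (C : ℝ) * (Φ hk η S r₀)^k := by
  classical
  set R := univ.filter (fun r : Fin T => r.val < r₀) with hR
  set Pi := Fintype.piFinset (fun _ : Fin k => (univ : Finset (Fin N))) with hPi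
  set g : Fin T → (Fin k → Fin N) → ℝ :=
    fun r x => ∏ θ : Fin k, Real.exp (η * DD hk η S r.val (x θ)) with hg
  set G : (Fin k → Fin N) → ℝ :=
    fun x => ∏ θ : Fin k, Real.exp (η * DD hk η S r₀ (x θ)) with hG
  have hGnn : ∀ x, 0 ≤ G x := fun x => Finset.prod_nonneg (fun θ _ => (Real.exp_pos _).le)
  have hsubPi : ∀ r : Fin T, Fintype.piFinset (fun θ => rejS S r θ) ⊆ Pi := by
    intro r x _
    rw [hPi, Fintype.mem_piFinset]
    intro θ; exact mem_univ _
  calc ∑ r ∈ R, (wq hk η S r)^k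
      ≤ ∑ r ∈ R, ∑ x ∈ Fintype.piFinset (fun θ => rejS S r θ), g r x := by
        refine Finset.sum_le_sum (fun r _ => ?_)
        refine (wq_pow_le_prod hk S r).trans_eq ?_
        exact Finset.prod_univ_sum _ _
    _ = ∑ r ∈ R, ∑ x ∈ Pi,
          (if x ∈ Fintype.piFinset (fun θ => rejS S r θ) then g r x else 0) := by
        refine Finset.sum_congr rfl (fun r _ => ?_)
        rw [Finset.sum_ite_mem, Finset.inter_eq_right.mpr (hsubPi r)]
    _ = ∑ x ∈ Pi, ∑ r ∈ R,
          (if x ∈ Fintype.piFinset (fun θ => rejS S r θ) then g r x else 0) :=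
        Finset.sum_comm
    _ ≤ ∑ x ∈ Pi, (C : ℝ) * G x := by
        refine Finset.sum_le_sum (fun x _ => ?_)
        have hsub2 : (R.filter (fun r => x ∈ Fintype.piFinset (fun θ => rejS S r θ))) ⊆
            univ.filter (fun r : Fin T => ¬ ∃ θ : Fin k, ∀ i ∈ (univ.image x), θ ∈ S r i) := by
          intro r hr
          simp only [mem_filter] at hr ⊢
          refine ⟨mem_univ _, ?_⟩
          rintro ⟨θ, hθ⟩
          have hx : x θ ∈ rejS S r θ := (Fintype.mem_piFinset.mp hr.2) θ
          have hnot : θ ∉ S r (x θ) := by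
            simp only [rejS, mem_filter] at hx
            exact hx.2
          exact hnot (hθ (x θ) (Finset.mem_image_of_mem x (mem_univ θ)))
        have hcard : (R.filter (fun r => x ∈ Fintype.piFinset (fun θ => rejS S r θ))).card ≤ C := by
          refine le_trans (Finset.card_le_card hsub2) ?_
          refine hS (univ.image x) ?_
          calc (univ.image x).card ≤ (univ : Finset (Fin k)).card := Finset.card_image_le
            _ = k := by simp
        have hterm : ∀ r ∈ R.filter (fun r => x ∈ Fintype.piFinset (fun θ => rejS S r θ)),
            g r x ≤ G x := by
          intro r hr
          simp only [mem_filter, hR] at hr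
          refine Finset.prod_le_prod (fun θ _ => (Real.exp_pos _).le) (fun θ _ => ?_)
          refine Real.exp_le_exp.mpr (mul_le_mul_of_nonneg_left ?_ hη)
          exact_mod_cast DD_mono hk S hη (le_of_lt hr.1.2) (x θ)
        calc ∑ r ∈ R, (if x ∈ Fintype.piFinset (fun θ => rejS S r θ) then g r x else 0)
            = ∑ r ∈ R.filter (fun r => x ∈ Fintype.piFinset (fun θ => rejS S r θ)), g r x :=
              (Finset.sum_filter _ _).symm
          _ ≤ (R.filter (fun r => x ∈ Fintype.piFinset (fun θ => rejS S r θ))).card • G x :=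
              Finset.sum_le_card_nsmul _ _ _ hterm
          _ = ((R.filter (fun r => x ∈ Fintype.piFinset (fun θ => rejS S r θ))).card : ℝ) * G x := by
              rw [nsmul_eq_mul]
          _ ≤ (C : ℝ) * G x := by
              refine mul_le_mul_of_nonneg_right ?_ (hGnn x)
              exact_mod_cast hcard
    _ = (C : ℝ) * (Φ hk η S r₀)^k := by
        rw [← Finset.mul_sum]
        congr 1
        simp only [hG, hPi]
        rw [← Finset.prod_univ_sum (fun _ : Fin k => (univ : Finset (Fin N)))
          (fun _ i => Real.exp (η * DD hk η S r₀ i))]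
        unfold Φ
        rw [Finset.prod_const, card_univ, Fintype.card_fin]

end Budget

end EW

namespace EW

lemma exp_le_one_add_two_mul {x : ℝ} (h0 : 0 ≤ x) (h1 : x ≤ 1) : Real.exp x ≤ 1 + 2*x := by
  have hconv := convexOn_exp.2 (Set.mem_univ (0:ℝ)) (Set.mem_univ (1:ℝ))
    (by linarith : (0:ℝ) ≤ 1 - x) h0 (by ring : (1 - x) + x = 1)
  simp only [smul_eq_mul, mul_zero, mul_one, zero_add, Real.exp_zero] at hconv
  have he : Real.exp 1 < 2.7182818286 := Real.exp_one_lt_d9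
  nlinarith [hconv]

lemma one_le_exp_of_nonneg {x : ℝ} (h : 0 ≤ x) : (1:ℝ) ≤ Real.exp x := by
  rw [show (1:ℝ) = Real.exp 0 from Real.exp_zero.symm]
  exact Real.exp_le_exp.mpr h

section Growth

variable {k N T : ℕ} (hk : 0 < k) (η : ℝ) (S : Fin T → Fin N → Finset (Fin k)) (ε : ℝ)

open Classical in
noncomputable def heavyF : Finset (Fin T) :=
  univ.filter (fun r => ε * Φ hk η S r.val ≤ wq hk η S r)

open Classical in
noncomputable def Hc : ℕ → ℕ := fun r => ∑ t ∈ Finset.range r,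
  (if h : t < T then (if ε * Φ hk η S t ≤ wq hk η S ⟨t, h⟩ then 1 else 0) else 0)

open Classical in
lemma Hc_T_eq : Hc hk η S ε T = (heavyF hk η S ε).card := by
  unfold heavyF Hc
  rw [Finset.card_filter]
  rw [← Fin.sum_univ_eq_sum_range
    (fun t => if h : t < T then (if ε * Φ hk η S t ≤ wq hk η S ⟨t, h⟩ then 1 else 0) else 0) T]
  apply Finset.sum_congr rfl
  intro t _
  simp [t.isLt]

open Classical in
lemma growth (hN : 0 < N) (hη0 : 0 ≤ η) (hε : 0 ≤ ε) (r : ℕ) (hr : r ≤ T) :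
    Φ hk η S r ≤ N * Real.exp ((Real.exp η - 1) * (ε * r + Hc hk η S ε r)) := by
  have hγ0 : (0:ℝ) ≤ Real.exp η - 1 := by
    have := one_le_exp_of_nonneg hη0; linarith
  induction r with
  | zero =>
    have h0 : Φ hk η S 0 = (N : ℝ) := by
      unfold Φ
      simp [DD]
    rw [h0]
    have hx : (0:ℝ) ≤ (Real.exp η - 1) * (ε * (0:ℕ) + Hc hk η S ε 0) := by positivity
    have hN1 : (1:ℝ) ≤ (N:ℝ) := by exact_mod_cast hN
    nlinarith [one_le_exp_of_nonneg hx]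
  | succ r ih =>
    have hrT : r < T := Nat.lt_of_succ_le hr
    have IH := ih (le_of_lt hrT)
    set γ := Real.exp η - 1 with hγ
    set rf : Fin T := ⟨r, hrT⟩ with hrf
    have hPs : Φ hk η S (r+1) = Φ hk η S r + γ * wq hk η S rf := Phi_succ hk S rf
    have hHc : Hc hk η S ε (r+1) = Hc hk η S ε r
        + (if ε * Φ hk η S r ≤ wq hk η S rf then 1 else 0) := by
      unfold Hc
      rw [Finset.sum_range_succ, dif_pos hrT]
    have hΦpos : 0 < Φ hk η S r := Phi_pos' hk S hN r
    have hwnn : 0 ≤ wq hk η S rf := wq_nonneg hk S rf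
    have hNnn : (0:ℝ) < (N:ℝ) := by exact_mod_cast hN
    by_cases hcase : ε * Φ hk η S r ≤ wq hk η S rf
    · -- heavy round
      have hH1 : Hc hk η S ε (r+1) = Hc hk η S ε r + 1 := by rw [hHc, if_pos hcase]
      have hstep : Φ hk η S (r+1) ≤ Φ hk η S r * Real.exp γ := by
        have hw : wq hk η S rf ≤ Φ hk η S r := wq_le_Phi hk S rf
        have he : γ + 1 ≤ Real.exp γ := Real.add_one_le_exp γ
        calc Φ hk η S (r+1) = Φ hk η S r + γ * wq hk η S rf := hPs
          _ ≤ Φ hk η S r + γ * Φ hk η S r := by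
              exact add_le_add_right (mul_le_mul_of_nonneg_left hw hγ0) _
          _ = Φ hk η S r * (γ + 1) := by ring
          _ ≤ Φ hk η S r * Real.exp γ := mul_le_mul_of_nonneg_left he hΦpos.le
      calc Φ hk η S (r+1) ≤ Φ hk η S r * Real.exp γ := hstep
        _ ≤ (N * Real.exp (γ * (ε * r + Hc hk η S ε r))) * Real.exp γ :=
            mul_le_mul_of_nonneg_right IH (Real.exp_pos γ).le
        _ = N * Real.exp (γ * (ε * r + Hc hk η S ε r) + γ) := by
            rw [mul_assoc, ← Real.exp_add]
        _ ≤ N * Real.exp (γ * (ε * (r+1:ℕ) + Hc hk η S ε (r+1))) := by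
            refine mul_le_mul_of_nonneg_left (Real.exp_le_exp.mpr ?_) hNnn.le
            rw [hH1]
            push_cast
            nlinarith
    · -- light round
      have hH1 : Hc hk η S ε (r+1) = Hc hk η S ε r := by rw [hHc, if_neg hcase, add_zero]
      have hlt : wq hk η S rf ≤ ε * Φ hk η S r := (le_of_lt (lt_of_not_ge hcase))
      have hstep : Φ hk η S (r+1) ≤ Φ hk η S r * Real.exp (γ * ε) := by
        have he : γ * ε + 1 ≤ Real.exp (γ * ε) := Real.add_one_le_exp _
        calc Φ hk η S (r+1) = Φ hk η S r + γ * wq hk η S rf := hPs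
          _ ≤ Φ hk η S r + γ * (ε * Φ hk η S r) := by
              exact add_le_add_right (mul_le_mul_of_nonneg_left hlt hγ0) _
          _ = Φ hk η S r * (γ * ε + 1) := by ring
          _ ≤ Φ hk η S r * Real.exp (γ * ε) := mul_le_mul_of_nonneg_left he hΦpos.le
      calc Φ hk η S (r+1) ≤ Φ hk η S r * Real.exp (γ * ε) := hstep
        _ ≤ (N * Real.exp (γ * (ε * r + Hc hk η S ε r))) * Real.exp (γ * ε) :=
            mul_le_mul_of_nonneg_right IH (Real.exp_pos _).le
        _ = N * Real.exp (γ * (ε * r + Hc hk η S ε r) + γ * ε) := by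
            rw [mul_assoc, ← Real.exp_add]
        _ ≤ N * Real.exp (γ * (ε * (r+1:ℕ) + Hc hk η S ε (r+1))) := by
            refine mul_le_mul_of_nonneg_left (Real.exp_le_exp.mpr ?_) hNnn.le
            rw [hH1]
            push_cast
            nlinarith

end Growth

end EW

namespace EW

section Layers

variable {k N T : ℕ} (hk : 0 < k) (η : ℝ) (S : Fin T → Fin N → Finset (Fin k)) (ε : ℝ)

noncomputable def lay (r : ℕ) : ℕ := Nat.log 2 ⌊Φ hk η S r / N⌋₊

lemma Phi_nonneg (r : ℕ) : 0 ≤ Φ hk η S r :=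
  Finset.sum_nonneg (fun i _ => (Real.exp_pos _).le)

variable {η}

lemma floor_phi_pos (hN : 0 < N) (hη0 : 0 ≤ η) (r : ℕ) : 1 ≤ ⌊Φ hk η S r / N⌋₊ := by
  apply Nat.le_floor
  rw [Nat.cast_one, one_le_div (by exact_mod_cast hN : (0:ℝ) < N)]
  exact N_le_Phi hk S hη0 r

lemma pow_lay_le (hN : 0 < N) (hη0 : 0 ≤ η) (r : ℕ) :
    (2:ℝ)^(lay hk η S r) * N ≤ Φ hk η S r := by
  have hNr : (0:ℝ) < N := by exact_mod_cast hN
  have h1 : (2:ℕ)^(lay hk η S r) ≤ ⌊Φ hk η S r / N⌋₊ :=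
    Nat.pow_log_le_self 2 (by have := floor_phi_pos hk S hN hη0 r; omega)
  have h2 : ((2:ℕ)^(lay hk η S r) : ℝ) ≤ Φ hk η S r / N := by
    refine le_trans ?_ (Nat.floor_le (div_nonneg (Phi_nonneg hk η S r) hNr.le))
    exact_mod_cast h1
  have h3 : ((2:ℕ)^(lay hk η S r) : ℝ) * N ≤ Φ hk η S r := by
    calc ((2:ℕ)^(lay hk η S r) : ℝ) * N ≤ (Φ hk η S r / N) * N :=
          mul_le_mul_of_nonneg_right h2 hNr.le
      _ = Φ hk η S r := by field_simp
  exact_mod_cast h3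

lemma phi_lt_lay (hN : 0 < N) (r : ℕ) :
    Φ hk η S r < (2:ℝ)^(lay hk η S r + 1) * N := by
  have hNr : (0:ℝ) < N := by exact_mod_cast hN
  have h1 : ⌊Φ hk η S r / N⌋₊ < (2:ℕ)^(lay hk η S r + 1) :=
    Nat.lt_pow_succ_log_self (by norm_num) _
  have h2 : Φ hk η S r / N < (2:ℝ)^(lay hk η S r + 1) := by
    have := (Nat.floor_lt (div_nonneg (Phi_nonneg hk η S r) hNr.le)).mp h1
    exact_mod_cast this
  exact (div_lt_iff₀ hNr).mp h2

open Classical in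
lemma layer_bound (hN : 0 < N) (hη0 : 0 ≤ η) (hη1 : η ≤ 1) (hε : 0 < ε) {C : ℕ}
    (hS : conflictNumberLe S C) (j : ℕ) :
    (((heavyF hk η S ε).filter (fun r => lay hk η S r.val = j)).card : ℝ) * ε^k
      ≤ (C:ℝ) * (2 * Real.exp 1)^k := by
  set F := (heavyF hk η S ε).filter (fun r => lay hk η S r.val = j) with hF
  rcases F.eq_empty_or_nonempty with hFe | hFne
  · rw [hFe]
    simp only [Finset.card_empty, Nat.cast_zero, zero_mul]
    positivity
  set B : ℝ := (2:ℝ)^j * N with hB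
  have hNr : (0:ℝ) < N := by exact_mod_cast hN
  have hBpos : 0 < B := by positivity
  have hwB : ∀ r ∈ F, ε * B ≤ wq hk η S r := by
    intro r hr
    rw [hF, mem_filter] at hr
    obtain ⟨hrh, hrl⟩ := hr
    have h1 : B ≤ Φ hk η S r.val := by
      rw [hB, ← hrl]
      exact pow_lay_le hk S hN hη0 r.val
    have h2 : ε * Φ hk η S r.val ≤ wq hk η S r := by
      unfold heavyF at hrh
      rw [mem_filter] at hrh
      exact hrh.2
    calc ε * B ≤ ε * Φ hk η S r.val := mul_le_mul_of_nonneg_left h1 hε.le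
      _ ≤ wq hk η S r := h2
  set rs := F.max' hFne with hrs
  have hrsF : rs ∈ F := F.max'_mem hFne
  have hrsl : lay hk η S rs.val = j := by
    rw [hF, mem_filter] at hrsF
    exact hrsF.2
  have hΦsucc : Φ hk η S (rs.val+1) ≤ Real.exp 1 * (2 * B) := by
    have h1 : Φ hk η S (rs.val+1) = Φ hk η S rs.val + (Real.exp η - 1) * wq hk η S rs :=
      Phi_succ hk S rs
    have hw : wq hk η S rs ≤ Φ hk η S rs.val := wq_le_Phi hk S rs
    have hγ0 : (0:ℝ) ≤ Real.exp η - 1 := by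
      have := one_le_exp_of_nonneg hη0; linarith
    have h2 : Φ hk η S (rs.val+1) ≤ Φ hk η S rs.val * Real.exp η := by
      rw [h1]
      nlinarith [Phi_nonneg hk η S rs.val]
    have h3 : Φ hk η S rs.val < 2 * B := by
      have := phi_lt_lay (η := η) hk S hN rs.val
      rw [hrsl] at this
      calc Φ hk η S rs.val < (2:ℝ)^(j+1) * N := this
        _ = 2 * B := by rw [hB]; ring
    have h4 : Real.exp η ≤ Real.exp 1 := Real.exp_le_exp.mpr hη1
    have he1 : (0:ℝ) < Real.exp 1 := Real.exp_pos 1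
    have he0 : (0:ℝ) < Real.exp η := Real.exp_pos η
    calc Φ hk η S (rs.val+1) ≤ Φ hk η S rs.val * Real.exp η := h2
      _ ≤ (2*B) * Real.exp 1 := by nlinarith [Phi_nonneg hk η S rs.val]
      _ = Real.exp 1 * (2*B) := by ring
  have hsub : F ⊆ univ.filter (fun r : Fin T => r.val < rs.val + 1) := by
    intro r hr
    rw [mem_filter]
    refine ⟨mem_univ _, Nat.lt_succ_of_le ?_⟩
    exact_mod_cast F.le_max' r hr
  have hchain : (F.card : ℝ) * (ε*B)^k ≤ (C:ℝ) * (Real.exp 1 * (2*B))^k := by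
    calc (F.card : ℝ) * (ε*B)^k = (F.card) • ((ε*B)^k) := by rw [nsmul_eq_mul]
      _ ≤ ∑ r ∈ F, (wq hk η S r)^k := by
          refine Finset.card_nsmul_le_sum F _ _ (fun r hr => ?_)
          exact pow_le_pow_left₀ (by positivity) (hwB r hr) k
      _ ≤ ∑ r ∈ univ.filter (fun r : Fin T => r.val < rs.val + 1), (wq hk η S r)^k := by
          refine Finset.sum_le_sum_of_subset_of_nonneg hsub (fun r _ _ => ?_)
          exact pow_nonneg (wq_nonneg hk S r) k
      _ ≤ (C:ℝ) * (Φ hk η S (rs.val+1))^k := budget hk S hη0 hS (rs.val+1)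
      _ ≤ (C:ℝ) * (Real.exp 1 * (2*B))^k := by
          refine mul_le_mul_of_nonneg_left ?_ (by positivity)
          exact pow_le_pow_left₀ (Phi_nonneg hk η S _) hΦsucc k
  have hexpand : (ε*B)^k = ε^k * B^k := mul_pow ε B k
  have hexpand2 : (Real.exp 1 * (2*B))^k = (2*Real.exp 1)^k * B^k := by
    rw [show Real.exp 1 * (2*B) = (2*Real.exp 1) * B by ring, mul_pow]
  have hBk : (0:ℝ) < B^k := pow_pos hBpos k
  have := hchain
  rw [hexpand, hexpand2, ← mul_assoc, ← mul_assoc] at this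
  exact le_of_mul_le_mul_right this hBk

set_option maxHeartbeats 1000000 in
open Classical in
lemma heavy_total_aux (hN : 0 < N) (hη0 : 0 ≤ η) (hη1 : η ≤ 1) (hε : 0 < ε) {C : ℕ}
    (hS : conflictNumberLe S C) (J : ℕ)
    (hJ : ∀ r ∈ heavyF hk η S ε, lay hk η S r.val ≤ J) :
    ((heavyF hk η S ε).card : ℝ) * ε^k ≤ ((J:ℝ) + 1) * ((C:ℝ) * (2*Real.exp 1)^k) := by
  have hcard : (heavyF hk η S ε).card
      = ∑ j ∈ Finset.range (J+1),
          ((heavyF hk η S ε).filter (fun r => lay hk η S r.val = j)).card :=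
    Finset.card_eq_sum_card_fiberwise
      (fun r hr => Finset.mem_range.mpr (Nat.lt_succ_of_le (hJ r hr)))
  rw [hcard, Nat.cast_sum, Finset.sum_mul]
  calc ∑ j ∈ Finset.range (J+1),
        (((heavyF hk η S ε).filter (fun r => lay hk η S r.val = j)).card : ℝ) * ε^k
      ≤ ∑ _j ∈ Finset.range (J+1), (C:ℝ) * (2*Real.exp 1)^k :=
        Finset.sum_le_sum (fun j _ => layer_bound hk S ε hN hη0 hη1 hε hS j)
    _ = ((J:ℝ)+1) * ((C:ℝ) * (2*Real.exp 1)^k) := by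
        rw [Finset.sum_const, Finset.card_range, nsmul_eq_mul]
        push_cast
        ring

end Layers

set_option maxHeartbeats 1000000 in
open Classical in
lemma master {k N T C : ℕ} (hk : 0 < k) (hN : 2 ≤ N) {η ε : ℝ}
    (hη0 : 0 < η) (hη1 : η ≤ 1) (hε : 0 < ε)
    (hba : (Real.exp η - 1) * ((C:ℝ) * (2*Real.exp 1)^k / ε^k) ≤ Real.log 2 / 2)
    (S : Fin T → Fin N → Finset (Fin k)) (hS : conflictNumberLe S C) (i : Fin N) :
    η * (DD hk η S T i : ℝ) ≤ Real.log (2*(N:ℝ)) + 4*η*ε*(T:ℝ) := by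
  have hN0 : 0 < N := lt_of_lt_of_le Nat.zero_lt_two hN
  have hNr : (0:ℝ) < N := by exact_mod_cast hN0
  set γ := Real.exp η - 1 with hγdef
  have hγ0 : 0 ≤ γ := by
    have := one_le_exp_of_nonneg hη0.le; rw [hγdef]; linarith
  have hγ2 : γ ≤ 2*η := by
    have := exp_le_one_add_two_mul hη0.le hη1; rw [hγdef]; linarith
  set H := (heavyF hk η S ε).card with hH
  have hgrow : Φ hk η S T ≤ N * Real.exp (γ * (ε*T + H)) := by
    have := growth hk η S ε hN0 hη0.le hε.le T le_rfl
    rwa [Hc_T_eq] at this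
  have hkey : Real.exp (η * (DD hk η S T i : ℕ)) ≤ Φ hk η S T := exp_le_Phi hk S T i
  have hlog2pos : 0 < Real.log 2 := Real.log_pos (by norm_num)
  have hγH : γ * H ≤ γ * (ε*T) + Real.log 2 := by
    rcases (heavyF hk η S ε).eq_empty_or_nonempty with he | hne
    · rw [hH, he]
      simp only [Finset.card_empty, Nat.cast_zero, mul_zero]
      positivity
    · obtain ⟨rh, hrh, hmax⟩ := Finset.exists_max_image (heavyF hk η S ε)
        (fun r => lay hk η S r.val) hne
      set Jm := lay hk η S rh.val with hJm
      have h2J : (2:ℝ)^Jm * N ≤ Φ hk η S T := by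
        calc (2:ℝ)^Jm * N ≤ Φ hk η S rh.val := pow_lay_le hk S hN0 hη0.le rh.val
          _ ≤ Φ hk η S T := Phi_mono hk S hη0.le (le_of_lt rh.isLt)
      have hkey2 : (2:ℝ)^Jm ≤ Real.exp (γ*(ε*T + H)) := by
        have h5 : (2:ℝ)^Jm * N ≤ Real.exp (γ*(ε*T + H)) * N := by
          calc (2:ℝ)^Jm * N ≤ Φ hk η S T := h2J
            _ ≤ N * Real.exp (γ*(ε*T + H)) := hgrow
            _ = Real.exp (γ*(ε*T + H)) * N := by ring
        exact le_of_mul_le_mul_right h5 hNr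
      have hlog : (Jm:ℝ) * Real.log 2 ≤ γ*(ε*T+H) := by
        have := Real.log_le_log (by positivity) hkey2
        rwa [Real.log_pow, Real.log_exp] at this
      have htot := heavy_total_aux hk S ε hN0 hη0.le hη1 hε hS Jm hmax
      rw [← hH] at htot
      have hγH2 : γ * H ≤ ((Jm:ℝ)+1) * (Real.log 2 / 2) := by
        have hεk : (0:ℝ) < ε^k := pow_pos hε k
        have hH_le : (H:ℝ) ≤ ((Jm:ℝ)+1) * ((C:ℝ)*(2*Real.exp 1)^k) / ε^k :=
          (le_div_iff₀ hεk).mpr htot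
        calc γ*H ≤ γ * (((Jm:ℝ)+1) * ((C:ℝ)*(2*Real.exp 1)^k) / ε^k) :=
              mul_le_mul_of_nonneg_left hH_le hγ0
          _ = ((Jm:ℝ)+1) * (γ * ((C:ℝ)*(2*Real.exp 1)^k / ε^k)) := by ring
          _ ≤ ((Jm:ℝ)+1) * (Real.log 2 / 2) := by
              refine mul_le_mul_of_nonneg_left hba ?_
              positivity
      nlinarith [hlog, hγH2]
  calc η * (DD hk η S T i : ℝ)
      = Real.log (Real.exp (η * (DD hk η S T i : ℕ))) := (Real.log_exp _).symm
    _ ≤ Real.log (N * Real.exp (γ * (ε*T + H))) :=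
        Real.log_le_log (Real.exp_pos _) (hkey.trans hgrow)
    _ = Real.log N + γ * (ε*T + H) := by
        rw [Real.log_mul (ne_of_gt hNr) (Real.exp_ne_zero _), Real.log_exp]
    _ ≤ Real.log N + (γ * (ε*T) + (γ * (ε*T) + Real.log 2)) := by
        have hexpand : γ * (ε*T + H) = γ * (ε*T) + γ * H := by ring
        rw [hexpand]
        linarith [hγH]
    _ ≤ Real.log (2*(N:ℝ)) + 4*η*ε*(T:ℝ) := by
        rw [Real.log_mul (by norm_num) (ne_of_gt hNr)]
        have hT0 : (0:ℝ) ≤ (T:ℝ) := Nat.cast_nonneg T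
        have h6 : γ * (ε*T) ≤ 2*η*ε*T := by
          have : γ * (ε * T) ≤ (2*η) * (ε*T) :=
            mul_le_mul_of_nonneg_right hγ2 (by positivity)
          linarith [this]
        linarith

end EW

lemma EW.dissat_le_T {k N T : ℕ} (σ : List (Fin N → Finset (Fin k)) → Fin k)
    (S : Fin T → Fin N → Finset (Fin k)) (i : Fin N) : dissat σ S i ≤ T := by
  unfold dissat
  calc (Finset.univ.filter fun r : Fin T => play σ S r ∉ S r i).card
      ≤ (Finset.univ : Finset (Fin T)).card := Finset.card_filter_le _ _
    _ = T := by simp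

set_option maxHeartbeats 1000000 in
theorem exponential_weights_dissatisfaction_bound :
    ∃ c : ℝ, 0 < c ∧
      ∀ k N T C : ℕ, 1 ≤ k → 2 ≤ N → 1 ≤ T → 1 ≤ C →
        ∃ σ : List (Fin N → Finset (Fin k)) → Fin k,
          ∀ S : Fin T → Fin N → Finset (Fin k), conflictNumberLe S C →
            ∀ i : Fin N,
              (dissat σ S i : ℝ) ≤
                c * (T : ℝ) ^ (1 - 1 / ((k : ℝ) + 1)) *
                  ((C : ℝ) * (k : ℝ) * Real.log N) ^ (1 / ((k : ℝ) + 1)) := by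
  classical
  refine ⟨160, by norm_num, ?_⟩
  intro k N T C hk hN hT hC
  have hk0 : 0 < k := hk
  have hkr1 : (1:ℝ) ≤ (k:ℝ) := by exact_mod_cast hk
  set β : ℝ := 1 / ((k:ℝ) + 1) with hβ
  set p : ℝ := 1 - β with hp
  have hβ0 : 0 < β := by rw [hβ]; positivity
  have hβhalf : β ≤ 1/2 := by
    rw [hβ, div_le_div_iff₀ (by positivity) (by norm_num)]
    linarith
  have hp0 : 0 < p := by rw [hp]; linarith
  have hppβ : p + β = 1 := by rw [hp]; ring
  set L : ℝ := Real.log N with hL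
  have hN1 : (1:ℝ) < (N:ℝ) := by exact_mod_cast (lt_of_lt_of_le Nat.one_lt_two hN)
  have hL0 : 0 < L := Real.log_pos hN1
  have hlog2L : Real.log 2 ≤ L := Real.log_le_log (by norm_num) (by exact_mod_cast hN)
  have hCr1 : (1:ℝ) ≤ (C:ℝ) := by exact_mod_cast hC
  have hTr1 : (1:ℝ) ≤ (T:ℝ) := by exact_mod_cast hT
  have hkinv0 : (0:ℝ) ≤ ((k:ℝ))⁻¹ := by positivity
  have hkinv1 : ((k:ℝ))⁻¹ ≤ 1 := by
    rw [← one_div, div_le_one (by positivity)]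
    exact hkr1
  set Q : ℝ := (T:ℝ) * (C:ℝ) ^ ((k:ℝ))⁻¹ with hQ
  have hCk1 : (1:ℝ) ≤ (C:ℝ) ^ ((k:ℝ))⁻¹ := by
    have := Real.rpow_le_rpow (by norm_num : (0:ℝ) ≤ 1) hCr1 hkinv0
    rwa [Real.one_rpow] at this
  have hQ1 : (1:ℝ) ≤ Q := by
    rw [hQ]
    calc (1:ℝ) = 1 * 1 := by ring
      _ ≤ (T:ℝ) * (C:ℝ) ^ ((k:ℝ))⁻¹ :=
          mul_le_mul hTr1 hCk1 (by norm_num) (le_trans zero_le_one hTr1)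
  have hQ0 : (0:ℝ) < Q := lt_of_lt_of_le one_pos hQ1
  have hpkβ : p * ((k:ℝ))⁻¹ = β := by
    have hkne : (k:ℝ) ≠ 0 := by positivity
    rw [hp, hβ]
    field_simp
    ring
  set η : ℝ := (L/Q) ^ p with hη
  have hη0 : 0 < η := Real.rpow_pos_of_pos (div_pos hL0 hQ0) p
  -- the common quantity
  set X : ℝ := L ^ β * Q ^ p with hX
  have hX0 : 0 < X := by
    rw [hX]
    have := Real.rpow_pos_of_pos hL0 β
    have := Real.rpow_pos_of_pos hQ0 p
    positivity
  have hQp : Q ^ p = (T:ℝ)^p * (C:ℝ)^β := by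
    rw [hQ, Real.mul_rpow (by positivity) (by positivity)]
    congr 1
    rw [← Real.rpow_mul (by positivity), mul_comm ((k:ℝ))⁻¹ p, hpkβ]
  have hCkL : (C:ℝ)^β * L^β ≤ ((C:ℝ) * (k:ℝ) * L)^β := by
    rw [← Real.mul_rpow (by positivity) hL0.le]
    refine Real.rpow_le_rpow (by positivity) ?_ hβ0.le
    calc (C:ℝ) * L = (C:ℝ) * 1 * L := by ring
      _ ≤ (C:ℝ) * (k:ℝ) * L := by
          refine mul_le_mul_of_nonneg_right ?_ hL0.le
          exact mul_le_mul_of_nonneg_left hkr1 (by positivity)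
  have hXbound : X ≤ (T:ℝ)^p * ((C:ℝ) * (k:ℝ) * L)^β := by
    rw [hX, hQp]
    have hTp0 : (0:ℝ) ≤ (T:ℝ)^p := Real.rpow_nonneg (by positivity) p
    calc L^β * ((T:ℝ)^p * (C:ℝ)^β) = (T:ℝ)^p * ((C:ℝ)^β * L^β) := by ring
      _ ≤ (T:ℝ)^p * ((C:ℝ) * (k:ℝ) * L)^β := by
          exact mul_le_mul_of_nonneg_left hCkL hTp0
  by_cases hcase : η ≤ 1
  · -- main case : exponential weights strategy
    set ε : ℝ := 2 * Real.exp 1 * (7*η*(C:ℝ)) ^ ((k:ℝ))⁻¹ with hεdef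
    have hbase0 : (0:ℝ) < 7*η*(C:ℝ) := by positivity
    have hεpos : 0 < ε := by
      rw [hεdef]
      have := Real.rpow_pos_of_pos hbase0 ((k:ℝ))⁻¹
      positivity
    refine ⟨EW.strat hk0 η, ?_⟩
    intro S hS i
    have hεk : ε^k = (2*Real.exp 1)^k * (7*η*(C:ℝ)) := by
      rw [hεdef, mul_pow]
      congr 1
      exact Real.rpow_inv_natCast_pow hbase0.le (by omega : k ≠ 0)
    have hγ2 : Real.exp η - 1 ≤ 2*η := by
      have := EW.exp_le_one_add_two_mul hη0.le hcase
      linarith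
    have hγ0 : 0 ≤ Real.exp η - 1 := by
      have := EW.one_le_exp_of_nonneg hη0.le
      linarith
    have hba : (Real.exp η - 1) * ((C:ℝ) * (2*Real.exp 1)^k / ε^k) ≤ Real.log 2 / 2 := by
      rw [hεk]
      have h2e : (0:ℝ) < (2*Real.exp 1)^k := by positivity
      have hCr0 : (0:ℝ) < (C:ℝ) := lt_of_lt_of_le one_pos hCr1
      have h1 : (C:ℝ) * (2*Real.exp 1)^k / ((2*Real.exp 1)^k * (7*η*(C:ℝ))) = 1/(7*η) := by
        field_simp
      rw [h1]
      have h2 : (Real.exp η - 1) * (1/(7*η)) ≤ 2/7 := by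
        rw [mul_one_div, div_le_div_iff₀ (by positivity) (by norm_num)]
        linarith [hγ2]
      have hlog2 : (0.6931471803:ℝ) < Real.log 2 := Real.log_two_gt_d9
      linarith [h2]
    have hmaster := EW.master hk0 hN hη0 hcase hεpos hba S hS i
    rw [EW.dissat_eq hk0 η S i]
    have hD1 : (EW.DD hk0 η S T i : ℝ) ≤ Real.log (2*(N:ℝ)) / η + 4*ε*(T:ℝ) := by
      rw [div_add' _ _ _ (ne_of_gt hη0), le_div_iff₀ hη0]
      linarith [hmaster]
    have hlog2N : Real.log (2*(N:ℝ)) ≤ 2*L := by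
      rw [Real.log_mul (by norm_num) (by positivity)]
      linarith
    have hD2 : (EW.DD hk0 η S T i : ℝ) ≤ 2*L/η + 4*ε*(T:ℝ) := by
      refine hD1.trans (add_le_add_left ?_ _)
      gcongr
    -- identity 1 : L / η = X
    have hLη : L / η = X := by
      have h1 : L / L^p = L^β := by
        rw [show L / L^p = L^(1:ℝ) / L^p by rw [Real.rpow_one], ← Real.rpow_sub hL0]
        congr 1
        rw [hp]; ring
      rw [hη, Real.div_rpow hL0.le hQ0.le, div_div_eq_mul_div, hX, ← h1,
        div_mul_eq_mul_div]
    -- identity 2 : ε * T = 2e * 7^(1/k) * X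
    have hεT : ε * (T:ℝ) = 2*Real.exp 1 * (7:ℝ)^((k:ℝ))⁻¹ * X := by
      rw [hεdef]
      have hsplit : (7*η*(C:ℝ)) ^ ((k:ℝ))⁻¹
          = (7:ℝ)^((k:ℝ))⁻¹ * η^((k:ℝ))⁻¹ * (C:ℝ)^((k:ℝ))⁻¹ := by
        rw [Real.mul_rpow (by positivity) (by positivity),
          Real.mul_rpow (by norm_num) hη0.le]
      rw [hsplit]
      have hηk : η^((k:ℝ))⁻¹ = (L/Q)^β := by
        rw [hη, ← Real.rpow_mul (div_pos hL0 hQ0).le, hpkβ]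
      rw [hηk]
      have hrest : (L/Q)^β * ((C:ℝ)^((k:ℝ))⁻¹ * (T:ℝ)) = X := by
        have hq1 : Q / Q^β = Q^p := by
          rw [show Q / Q^β = Q^(1:ℝ) / Q^β by rw [Real.rpow_one], ← Real.rpow_sub hQ0]
        rw [Real.div_rpow hL0.le hQ0.le,
            show (C:ℝ)^((k:ℝ))⁻¹ * (T:ℝ) = Q by rw [hQ]; ring,
            hX, ← hq1, div_mul_eq_mul_div, mul_div_assoc]
      calc 2*Real.exp 1 * ((7:ℝ)^((k:ℝ))⁻¹ * (L/Q)^β * (C:ℝ)^((k:ℝ))⁻¹) * (T:ℝ)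
          = 2*Real.exp 1 * (7:ℝ)^((k:ℝ))⁻¹ * ((L/Q)^β * ((C:ℝ)^((k:ℝ))⁻¹ * (T:ℝ))) := by
            ring
        _ = 2*Real.exp 1 * (7:ℝ)^((k:ℝ))⁻¹ * X := by rw [hrest]
    have h7k : (7:ℝ)^((k:ℝ))⁻¹ ≤ 7 := by
      have := Real.rpow_le_rpow_of_exponent_le (by norm_num : (1:ℝ) ≤ 7) hkinv1
      rwa [Real.rpow_one] at this
    have hexp1 : Real.exp 1 < 2.7182818286 := Real.exp_one_lt_d9
    have hexp1' : (0:ℝ) < Real.exp 1 := Real.exp_pos 1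
    have hfinal : 2*L/η + 4*ε*(T:ℝ) ≤ 155 * X := by
      have ht1 : 2*L/η = 2*X := by
        rw [mul_div_assoc, hLη]
      have ht2 : 4*ε*(T:ℝ) = 8*Real.exp 1 * (7:ℝ)^((k:ℝ))⁻¹ * X := by
        rw [mul_assoc, hεT]; ring
      rw [ht1, ht2]
      have h7k0 : (0:ℝ) ≤ (7:ℝ)^((k:ℝ))⁻¹ := Real.rpow_nonneg (by norm_num) _
      have hA : Real.exp 1 * (7:ℝ)^((k:ℝ))⁻¹ ≤ 2.7182818286 * 7 :=
        mul_le_mul hexp1.le h7k h7k0 (by norm_num)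
      have hcoef : 2 + 8*(Real.exp 1 * (7:ℝ)^((k:ℝ))⁻¹) ≤ 155 := by linarith
      calc 2*X + 8*Real.exp 1 * (7:ℝ)^((k:ℝ))⁻¹ * X
          = (2 + 8*(Real.exp 1 * (7:ℝ)^((k:ℝ))⁻¹)) * X := by ring
        _ ≤ 155 * X := mul_le_mul_of_nonneg_right hcoef hX0.le
    calc (EW.DD hk0 η S T i : ℝ) ≤ 2*L/η + 4*ε*(T:ℝ) := hD2
      _ ≤ 155 * X := hfinal
      _ ≤ 155 * ((T:ℝ)^p * ((C:ℝ) * (k:ℝ) * L)^β) := by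
          exact mul_le_mul_of_nonneg_left hXbound (by norm_num)
      _ ≤ 160 * (T:ℝ)^p * ((C:ℝ) * (k:ℝ) * L)^β := by
          have h1 : (0:ℝ) ≤ (T:ℝ)^p := Real.rpow_nonneg (by positivity) p
          have h2 : (0:ℝ) ≤ ((C:ℝ) * (k:ℝ) * L)^β := Real.rpow_nonneg (by positivity) β
          have h3 : (155:ℝ) * ((T:ℝ)^p * ((C:ℝ) * (k:ℝ) * L)^β)
              ≤ 160 * ((T:ℝ)^p * ((C:ℝ) * (k:ℝ) * L)^β) :=
            mul_le_mul_of_nonneg_right (by norm_num) (mul_nonneg h1 h2)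
          calc (155:ℝ) * ((T:ℝ)^p * ((C:ℝ) * (k:ℝ) * L)^β)
              ≤ 160 * ((T:ℝ)^p * ((C:ℝ) * (k:ℝ) * L)^β) := h3
            _ = 160 * (T:ℝ)^p * ((C:ℝ) * (k:ℝ) * L)^β := by ring
  · -- degenerate case : T is small
    refine ⟨fun _ => ⟨0, hk0⟩, ?_⟩
    intro S hS i
    have hd : (dissat (fun _ => (⟨0, hk0⟩ : Fin k)) S i : ℝ) ≤ (T:ℝ) := by
      exact_mod_cast EW.dissat_le_T _ S i
    have hQL : Q < L := by
      by_contra hcon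
      push_neg at hcon
      have h1 : L / Q ≤ 1 := by
        rw [div_le_one hQ0]; exact hcon
      have h2 : η ≤ 1 := by
        rw [hη]
        exact Real.rpow_le_one (by positivity) h1 hp0.le
      exact hcase h2
    have hTL : (T:ℝ) < L := by
      have h1 : (T:ℝ) ≤ Q := by
        rw [hQ]
        calc (T:ℝ) = (T:ℝ) * 1 := by ring
          _ ≤ (T:ℝ) * (C:ℝ) ^ ((k:ℝ))⁻¹ :=
              mul_le_mul_of_nonneg_left hCk1 (by positivity)
      linarith
    have hCk : (1:ℝ) ≤ (C:ℝ) * (k:ℝ) := by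
      calc (1:ℝ) = 1 * 1 := by ring
        _ ≤ (C:ℝ) * (k:ℝ) := mul_le_mul hCr1 hkr1 (by norm_num) (le_trans zero_le_one hCr1)
    have hTCkL : (T:ℝ) ≤ (C:ℝ) * (k:ℝ) * L := by
      have h2 : 1 * L ≤ ((C:ℝ) * (k:ℝ)) * L := mul_le_mul_of_nonneg_right hCk hL0.le
      calc (T:ℝ) ≤ L := hTL.le
        _ = 1 * L := by ring
        _ ≤ ((C:ℝ) * (k:ℝ)) * L := h2
        _ = (C:ℝ) * (k:ℝ) * L := by ring
    have hsplit : (T:ℝ) = (T:ℝ)^p * (T:ℝ)^β := by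
      rw [← Real.rpow_add (by positivity : (0:ℝ) < (T:ℝ)), hppβ, Real.rpow_one]
    have hTβ : (T:ℝ)^β ≤ ((C:ℝ) * (k:ℝ) * L)^β :=
      Real.rpow_le_rpow (by positivity) hTCkL hβ0.le
    have hTp : (0:ℝ) ≤ (T:ℝ)^p := Real.rpow_nonneg (by positivity) p
    calc (dissat (fun _ => (⟨0, hk0⟩ : Fin k)) S i : ℝ) ≤ (T:ℝ) := hd
      _ = (T:ℝ)^p * (T:ℝ)^β := hsplit
      _ ≤ (T:ℝ)^p * ((C:ℝ) * (k:ℝ) * L)^β := mul_le_mul_of_nonneg_left hTβ hTp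
      _ ≤ 160 * (T:ℝ)^p * ((C:ℝ) * (k:ℝ) * L)^β := by
          have h2 : (0:ℝ) ≤ ((C:ℝ) * (k:ℝ) * L)^β := Real.rpow_nonneg (by positivity) β
          have h3 : (1:ℝ) * ((T:ℝ)^p * ((C:ℝ) * (k:ℝ) * L)^β)
              ≤ 160 * ((T:ℝ)^p * ((C:ℝ) * (k:ℝ) * L)^β) :=
            mul_le_mul_of_nonneg_right (by norm_num) (mul_nonneg hTp h2)
          calc (T:ℝ)^p * ((C:ℝ) * (k:ℝ) * L)^β
              = 1 * ((T:ℝ)^p * ((C:ℝ) * (k:ℝ) * L)^β) := by ring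
            _ ≤ 160 * ((T:ℝ)^p * ((C:ℝ) * (k:ℝ) * L)^β) := h3
            _ = 160 * (T:ℝ)^p * ((C:ℝ) * (k:ℝ) * L)^β := by ring
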